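/- Let f, g : H → ℝ ∪ {∞} be closed, proper, convex functions on a real Hilbert space H, let γ > 0, let z* be a fixed point of T_PRS and x* := prox_{γg}(z*). Let (λ_j)_{j≥0} ⊆ (0,1) with τ := inf_j λ_j(1−λ_j) > 0, define z^{k+1} = (1−λ_k)z^k + λ_k T_PRS(z^k) from z^0 ∈ H, and set x_g^k := prox_{γg}(z^k), x_f^k := prox_{γf}(2x_g^k − z^k). Then for all k ≥ 0: −‖z^0 − z*‖·‖z* − x*‖/(2γ√(τ(k+1))) ≤ f(x_f^k) + g(x_g^k) − f(x*) − g(x*) ≤ (‖z^0 − z*‖ + ‖z* − x*‖)·‖z^0 − z*‖/(2γ√(τ(k+1))), and √(k+1)·|f(x_f^k) + g(x_g^k) − f(x*) − g(x*)| → 0 as k → ∞. -/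

import Mathlib

namespace PRSaux

variable {H : Type*} [NormedAddCommGroup H] [InnerProductSpace ℝ H]

local notation "⟪" x ", " y "⟫" => @inner ℝ _ _ x y

lemma le_of_sq_le_sq {a b : ℝ} (ha : 0 ≤ a) (hb : 0 ≤ b) (h : a^2 ≤ b^2) : a ≤ b := by
  have := Real.sqrt_le_sqrt h
  rwa [Real.sqrt_sq ha, Real.sqrt_sq hb] at this

lemma id1 (zk p q xs : H) :
    ⟪zk - p, p - xs⟫ + ⟪(2:ℝ)•p - zk - q, q - xs⟫
      = ⟪p - q, zk - xs⟫ - ‖p - q‖^2 := by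
  simp only [two_smul, inner_sub_left, inner_sub_right, inner_add_left, inner_add_right,
    real_inner_self_eq_norm_sq, norm_sub_sq_real]
  linarith [real_inner_comm zk p, real_inner_comm zk q, real_inner_comm zk xs,
    real_inner_comm p q, real_inner_comm p xs, real_inner_comm q xs]

lemma id2 (a p q x : H) : ⟪a, p - x⟫ + ⟪-a, q - x⟫ = ⟪a, p - q⟫ := by
  simp only [inner_sub_right, inner_neg_left]; ring

lemma id3 (lam : ℝ) (zz w v : H) :
    ‖(1 - lam)•zz + lam•w - v‖^2
      = (1-lam)*‖zz-v‖^2 + lam*‖w-v‖^2 - lam*(1-lam)*‖zz-w‖^2 := by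
  have h : (1 - lam)•zz + lam•w - v = (1-lam)•(zz-v) + lam•(w-v) := by module
  have e1 : ‖zz - w‖^2 = ‖zz-v‖^2 - 2*⟪zz-v, w-v⟫ + ‖w-v‖^2 := by
    have h2 : zz - w = (zz-v) - (w-v) := by abel
    rw [h2, norm_sub_sq_real]
  rw [h, norm_add_sq_real, norm_smul, norm_smul, real_inner_smul_left, real_inner_smul_right, e1]
  simp only [Real.norm_eq_abs, mul_pow, sq_abs]
  ring

lemma prox_spec_finite (φ : H → EReal) (hbot : ∀ x, φ x ≠ ⊥) (hprop : ∃ x, φ x ≠ ⊤)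
    (c : ℝ) (x p : H)
    (hp : ∀ y : H, φ p + ((c * ‖p - x‖ ^ 2 : ℝ) : EReal) ≤
        φ y + ((c * ‖y - x‖ ^ 2 : ℝ) : EReal)) : φ p ≠ ⊤ := by
  obtain ⟨y₀, hy₀⟩ := hprop
  intro htop
  have h := hp y₀
  rw [htop, EReal.top_add_of_ne_bot (EReal.coe_ne_bot _)] at h
  obtain ⟨r, hr⟩ : ∃ r : ℝ, φ y₀ = (r : EReal) := ⟨_, (EReal.coe_toReal hy₀ (hbot y₀)).symm⟩
  rw [hr, ← EReal.coe_add] at h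
  exact EReal.coe_ne_top _ (top_le_iff.mp h)

lemma prox_subgrad (φ : H → EReal) (hbot : ∀ x, φ x ≠ ⊥)
    (hconv : ∀ x y : H, ∀ a b : ℝ, 0 ≤ a → 0 ≤ b → a + b = 1 →
      φ (a • x + b • y) ≤ (a : EReal) * φ x + (b : EReal) * φ y)
    (γ : ℝ) (hγ : 0 < γ) (x p : H)
    (hp : ∀ y : H, φ p + ((1 / (2 * γ) * ‖p - x‖ ^ 2 : ℝ) : EReal) ≤
        φ y + ((1 / (2 * γ) * ‖y - x‖ ^ 2 : ℝ) : EReal))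
    (y : H) (hyt : φ y ≠ ⊤) (hpt : φ p ≠ ⊤) :
    (φ p).toReal + (1/γ) * ⟪x - p, y - p⟫ ≤ (φ y).toReal := by
  set c := 1 / (2 * γ) with hc
  have hc0 : 0 < c := by positivity
  set P := (φ p).toReal
  set Y := (φ y).toReal
  have hPe : φ p = (P : EReal) := (EReal.coe_toReal hpt (hbot p)).symm
  have hYe : φ y = (Y : EReal) := (EReal.coe_toReal hyt (hbot y)).symm
  have key : ∀ t : ℝ, 0 < t → t ≤ 1 → P ≤ Y + 2*c*⟪p - x, y - p⟫ + c*t*‖y - p‖^2 := by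
    intro t ht0 ht1
    have hcv := hconv p y (1 - t) t (by linarith) (le_of_lt ht0) (by ring)
    have hyt' : (1 - t) • p + t • y = p + t • (y - p) := by module
    rw [hyt', hPe, hYe] at hcv
    have hcv2 : φ (p + t • (y - p)) ≤ (((1-t)*P + t*Y : ℝ) : EReal) := by
      calc φ (p + t • (y - p)) ≤ ((1-t : ℝ) : EReal) * (P:EReal) + (t : EReal) * (Y:EReal) := hcv
        _ = (((1-t)*P + t*Y : ℝ) : EReal) := by
            rw [← EReal.coe_mul, ← EReal.coe_mul, ← EReal.coe_add]
    have hfin_top : φ (p + t • (y - p)) ≠ ⊤ := by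
      intro h; rw [h] at hcv2; exact EReal.coe_ne_top _ (top_le_iff.mp hcv2)
    set Yt := (φ (p + t • (y - p))).toReal
    have hYte : φ (p + t • (y - p)) = (Yt : EReal) := (EReal.coe_toReal hfin_top (hbot _)).symm
    have hYtle : Yt ≤ (1-t)*P + t*Y := by
      rw [hYte] at hcv2; exact_mod_cast hcv2
    have hp2 := hp (p + t • (y - p))
    rw [hPe, hYte] at hp2
    have hp3 : P + c * ‖p - x‖ ^ 2 ≤ Yt + c * ‖p + t • (y - p) - x‖ ^ 2 := by
      rw [← EReal.coe_add, ← EReal.coe_add] at hp2; exact_mod_cast hp2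
    have hnorm : ‖p + t • (y - p) - x‖ ^ 2
        = ‖p - x‖^2 + 2*t*⟪p - x, y - p⟫ + t^2*‖y - p‖^2 := by
      have h4 : p + t • (y - p) - x = (p - x) + t • (y - p) := by abel
      rw [h4, norm_add_sq_real, real_inner_smul_right, norm_smul]
      simp only [Real.norm_eq_abs, mul_pow, sq_abs]
      ring
    rw [hnorm] at hp3
    nlinarith [sq_nonneg t, norm_nonneg (y - p)]
  have main : P ≤ Y + 2*c*⟪p - x, y - p⟫ := by
    apply le_of_forall_pos_le_add
    intro ε hε
    have hd : 0 < c*‖y - p‖^2 + 1 := by positivity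
    set t := min 1 (ε / (c*‖y - p‖^2 + 1)) with htdef
    have ht0 : 0 < t := lt_min one_pos (by positivity)
    have ht1 : t ≤ 1 := min_le_left _ _
    have ht2 : t ≤ ε / (c*‖y - p‖^2 + 1) := min_le_right _ _
    have hk := key t ht0 ht1
    have : c*t*‖y - p‖^2 ≤ ε := by
      have h5 : t * (c*‖y - p‖^2 + 1) ≤ ε := by
        calc t * (c*‖y - p‖^2 + 1) ≤ (ε / (c*‖y - p‖^2 + 1)) * (c*‖y - p‖^2 + 1) := by
              apply mul_le_mul_of_nonneg_right ht2 (le_of_lt hd)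
          _ = ε := div_mul_cancel₀ _ (ne_of_gt hd)
      nlinarith
    linarith
  have hinner : ⟪x - p, y - p⟫ = -⟪p - x, y - p⟫ := by
    rw [← inner_neg_left]; congr 1; abel
  have h2c : 1/γ = 2*c := by rw [hc]; field_simp
  rw [hinner, h2c]
  linarith

lemma refl_nonexpansive (φ : H → EReal) (hbot : ∀ x, φ x ≠ ⊥) (hprop : ∃ x, φ x ≠ ⊤)
    (hconv : ∀ x y : H, ∀ a b : ℝ, 0 ≤ a → 0 ≤ b → a + b = 1 →
      φ (a • x + b • y) ≤ (a : EReal) * φ x + (b : EReal) * φ y)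
    (γ : ℝ) (hγ : 0 < γ) (P : H → H)
    (hP : ∀ x y : H, φ (P x) + ((1 / (2 * γ) * ‖P x - x‖ ^ 2 : ℝ) : EReal) ≤
        φ y + ((1 / (2 * γ) * ‖y - x‖ ^ 2 : ℝ) : EReal))
    (x y : H) :
    ‖((2:ℝ) • P x - x) - ((2:ℝ) • P y - y)‖ ≤ ‖x - y‖ := by
  set p := P x
  set q := P y
  have hpt : φ p ≠ ⊤ := prox_spec_finite φ hbot hprop _ x p (hP x)
  have hqt : φ q ≠ ⊤ := prox_spec_finite φ hbot hprop _ y q (hP y)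
  have h1 := prox_subgrad φ hbot hconv γ hγ x p (hP x) q hqt hpt
  have h2 := prox_subgrad φ hbot hconv γ hγ y q (hP y) p hpt hqt
  have hγ' : 0 < 1/γ := by positivity
  have hsum : ⟪x - p, q - p⟫ + ⟪y - q, p - q⟫ ≤ 0 := by
    have := add_le_add h1 h2
    nlinarith
  have hfirm : ‖p - q‖^2 ≤ ⟪p - q, x - y⟫ := by
    have e1 : ⟪y - q, p - q⟫ = -⟪y - q, q - p⟫ := by
      rw [← inner_neg_right]; congr 1; abel
    have e2 : ⟪x - p, q - p⟫ - ⟪y - q, q - p⟫ = ⟪(x - y) - (p - q), q - p⟫ := by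
      rw [← inner_sub_left]; congr 1; abel
    have e3 : ⟪(x - y) - (p - q), q - p⟫ = -⟪(x - y) - (p - q), p - q⟫ := by
      rw [← inner_neg_right]; congr 1; abel
    have e4 : ⟪(x - y) - (p - q), p - q⟫ = ⟪x - y, p - q⟫ - ⟪p - q, p - q⟫ := by
      rw [inner_sub_left]
    have e5 : ⟪p - q, p - q⟫ = ‖p - q‖^2 := real_inner_self_eq_norm_sq _
    have e6 : ⟪x - y, p - q⟫ = ⟪p - q, x - y⟫ := real_inner_comm _ _
    linarith [hsum]
  have hvec : ((2:ℝ) • p - x) - ((2:ℝ) • q - y) = (2:ℝ) • (p - q) - (x - y) := by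
    module
  rw [hvec]
  have hsq : ‖(2:ℝ) • (p - q) - (x - y)‖^2 ≤ ‖x - y‖^2 := by
    have h4 : ‖(2:ℝ) • (p-q) - (x-y)‖^2 = 4*‖p-q‖^2 - 4*⟪p-q, x-y⟫ + ‖x-y‖^2 := by
      rw [norm_sub_sq_real, norm_smul, real_inner_smul_left]
      simp only [Real.norm_eq_abs, mul_pow, sq_abs]
      ring
    linarith
  exact le_of_sq_le_sq (norm_nonneg _) (norm_nonneg _) hsq

end PRSaux

open PRSaux

set_option maxHeartbeats 1000000

local notation "⟪" x ", " y "⟫" => @inner ℝ _ _ x y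

/-- Theorem (nonergodic convergence of relaxed PRS): for closed, proper, convex
`f, g : H → ℝ ∪ {∞}`, `γ > 0`, a fixed point `z*` of `T_PRS` with `x* = prox_{γg}(z*)`,
relaxations `λ_k ∈ (0,1)` with `τ ≤ λ_k(1−λ_k)` for some `τ > 0`, iterates
`z^{k+1} = (1−λ_k)z^k + λ_k T_PRS z^k`, `x_g^k = prox_{γg}(z^k)`,
`x_f^k = prox_{γf}(2x_g^k − z^k)`, for all `k`:
`−‖z^0−z*‖‖z*−x*‖/(2γ√(τ(k+1))) ≤ f(x_f^k)+g(x_g^k)−f(x*)−g(x*) ≤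
 (‖z^0−z*‖+‖z*−x*‖)‖z^0−z*‖/(2γ√(τ(k+1)))`, and
`√(k+1)·|f(x_f^k)+g(x_g^k)−f(x*)−g(x*)| → 0`. -/
theorem relaxed_prs_nonergodic_convergence
    {H : Type*} [NormedAddCommGroup H] [InnerProductSpace ℝ H] [CompleteSpace H]
    (f g : H → EReal)
    (hf_bot : ∀ x, f x ≠ ⊥) (hg_bot : ∀ x, g x ≠ ⊥)
    (hf_proper : ∃ x, f x ≠ ⊤) (hg_proper : ∃ x, g x ≠ ⊤)
    (hf_lsc : LowerSemicontinuous f) (hg_lsc : LowerSemicontinuous g)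
    (hf_conv : ∀ x y : H, ∀ a b : ℝ, 0 ≤ a → 0 ≤ b → a + b = 1 →
      f (a • x + b • y) ≤ (a : EReal) * f x + (b : EReal) * f y)
    (hg_conv : ∀ x y : H, ∀ a b : ℝ, 0 ≤ a → 0 ≤ b → a + b = 1 →
      g (a • x + b • y) ≤ (a : EReal) * g x + (b : EReal) * g y)
    (γ : ℝ) (hγ : 0 < γ)
    (proxf proxg : H → H)
    (hproxf : ∀ x p : H, proxf x = p ↔
      ∀ y : H, f p + ((1 / (2 * γ) * ‖p - x‖ ^ 2 : ℝ) : EReal) ≤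
        f y + ((1 / (2 * γ) * ‖y - x‖ ^ 2 : ℝ) : EReal))
    (hproxg : ∀ x p : H, proxg x = p ↔
      ∀ y : H, g p + ((1 / (2 * γ) * ‖p - x‖ ^ 2 : ℝ) : EReal) ≤
        g y + ((1 / (2 * γ) * ‖y - x‖ ^ 2 : ℝ) : EReal))
    (T : H → H)
    (hT : ∀ w : H, T w = (2 : ℝ) • proxf ((2 : ℝ) • proxg w - w) - ((2 : ℝ) • proxg w - w))
    (zstar : H) (hzstar : T zstar = zstar)
    (xstar : H) (hxstar : xstar = proxg zstar)
    (lam : ℕ → ℝ) (hlam : ∀ k, lam k ∈ Set.Ioo (0 : ℝ) 1)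
    (τ : ℝ) (hτ0 : 0 < τ) (hτ : ∀ j, τ ≤ lam j * (1 - lam j))
    (z : ℕ → H) (hz : ∀ k, z (k + 1) = (1 - lam k) • z k + lam k • T (z k))
    (xg xf : ℕ → H)
    (hxg : ∀ k, xg k = proxg (z k))
    (hxf : ∀ k, xf k = proxf ((2 : ℝ) • xg k - z k)) :
    (∀ k : ℕ,
      ((-(‖z 0 - zstar‖ * ‖zstar - xstar‖ /
          (2 * γ * Real.sqrt (τ * ((k : ℝ) + 1)))) : ℝ) : EReal) ≤
        f (xf k) + g (xg k) - (f xstar + g xstar) ∧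
      f (xf k) + g (xg k) - (f xstar + g xstar) ≤
        (((‖z 0 - zstar‖ + ‖zstar - xstar‖) * ‖z 0 - zstar‖ /
          (2 * γ * Real.sqrt (τ * ((k : ℝ) + 1))) : ℝ) : EReal)) ∧
    Filter.Tendsto
      (fun k : ℕ => Real.sqrt ((k : ℝ) + 1) *
        |(f (xf k) + g (xg k) - (f xstar + g xstar)).toReal|)
      Filter.atTop (nhds 0) := by
  -- basic abbreviations
  set D := ‖z 0 - zstar‖ with hD
  set E := ‖zstar - xstar‖ with hE
  have hDn : 0 ≤ D := norm_nonneg _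
  have hEn : 0 ≤ E := norm_nonneg _
  -- prox specs
  have hpf : ∀ x : H, ∀ y : H, f (proxf x) + ((1 / (2 * γ) * ‖proxf x - x‖ ^ 2 : ℝ) : EReal) ≤
      f y + ((1 / (2 * γ) * ‖y - x‖ ^ 2 : ℝ) : EReal) := fun x => (hproxf x _).mp rfl
  have hpg : ∀ x : H, ∀ y : H, g (proxg x) + ((1 / (2 * γ) * ‖proxg x - x‖ ^ 2 : ℝ) : EReal) ≤
      g y + ((1 / (2 * γ) * ‖y - x‖ ^ 2 : ℝ) : EReal) := fun x => (hproxg x _).mp rfl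
  -- fixed point: proxf at the reflected point gives xstar
  have hxstar_f : proxf ((2:ℝ) • xstar - zstar) = xstar := by
    have h := hT zstar
    rw [hzstar, ← hxstar] at h
    rw [eq_sub_iff_add_eq] at h
    have h3 : (2:ℝ) • proxf ((2:ℝ) • xstar - zstar) = (2:ℝ) • xstar := by
      rw [← h]; module
    exact smul_right_injective H two_ne_zero h3
  -- specs at the iterate points
  have hspec_g : ∀ k, ∀ y : H, g (xg k) + ((1 / (2 * γ) * ‖xg k - z k‖ ^ 2 : ℝ) : EReal) ≤
      g y + ((1 / (2 * γ) * ‖y - z k‖ ^ 2 : ℝ) : EReal) :=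
    fun k => (hproxg (z k) (xg k)).mp (hxg k).symm
  have hspec_f : ∀ k, ∀ y : H, f (xf k) + ((1 / (2 * γ) * ‖xf k - ((2:ℝ) • xg k - z k)‖ ^ 2 : ℝ) : EReal) ≤
      f y + ((1 / (2 * γ) * ‖y - ((2:ℝ) • xg k - z k)‖ ^ 2 : ℝ) : EReal) :=
    fun k => (hproxf ((2:ℝ) • xg k - z k) (xf k)).mp (hxf k).symm
  have hspec_gs : ∀ y : H, g xstar + ((1 / (2 * γ) * ‖xstar - zstar‖ ^ 2 : ℝ) : EReal) ≤
      g y + ((1 / (2 * γ) * ‖y - zstar‖ ^ 2 : ℝ) : EReal) :=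
    (hproxg zstar xstar).mp hxstar.symm
  have hspec_fs : ∀ y : H, f xstar + ((1 / (2 * γ) * ‖xstar - ((2:ℝ) • xstar - zstar)‖ ^ 2 : ℝ) : EReal) ≤
      f y + ((1 / (2 * γ) * ‖y - ((2:ℝ) • xstar - zstar)‖ ^ 2 : ℝ) : EReal) :=
    (hproxf ((2:ℝ) • xstar - zstar) xstar).mp hxstar_f
  -- finiteness
  have hgp_fin : ∀ k, g (xg k) ≠ ⊤ := fun k =>
    prox_spec_finite g hg_bot hg_proper _ (z k) (xg k) (hspec_g k)
  have hfq_fin : ∀ k, f (xf k) ≠ ⊤ := fun k =>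
    prox_spec_finite f hf_bot hf_proper _ ((2:ℝ) • xg k - z k) (xf k) (hspec_f k)
  have hgs_fin : g xstar ≠ ⊤ :=
    prox_spec_finite g hg_bot hg_proper _ zstar xstar hspec_gs
  have hfs_fin : f xstar ≠ ⊤ :=
    prox_spec_finite f hf_bot hf_proper _ ((2:ℝ) • xstar - zstar) xstar hspec_fs
  -- real values
  set Fq : ℕ → ℝ := fun k => (f (xf k)).toReal with hFq
  set Gp : ℕ → ℝ := fun k => (g (xg k)).toReal with hGp
  set Fs : ℝ := (f xstar).toReal with hFs
  set Gs : ℝ := (g xstar).toReal with hGs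
  set gap : ℕ → ℝ := fun k => Fq k + Gp k - (Fs + Gs) with hgap
  -- EReal bridge
  have ebridge : ∀ k, f (xf k) + g (xg k) - (f xstar + g xstar) = ((gap k : ℝ) : EReal) := by
    intro k
    rw [show f (xf k) = ((Fq k : ℝ) : EReal) from (EReal.coe_toReal (hfq_fin k) (hf_bot _)).symm,
      show g (xg k) = ((Gp k : ℝ) : EReal) from (EReal.coe_toReal (hgp_fin k) (hg_bot _)).symm,
      show f xstar = ((Fs : ℝ) : EReal) from (EReal.coe_toReal hfs_fin (hf_bot _)).symm,
      show g xstar = ((Gs : ℝ) : EReal) from (EReal.coe_toReal hgs_fin (hg_bot _)).symm,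
      ← EReal.coe_add, ← EReal.coe_add, ← EReal.coe_sub]
  -- nonexpansiveness of T
  have hTne : ∀ a b : H, ‖T a - T b‖ ≤ ‖a - b‖ := by
    intro a b
    rw [hT a, hT b]
    calc ‖(2:ℝ) • proxf ((2:ℝ) • proxg a - a) - ((2:ℝ) • proxg a - a) -
          ((2:ℝ) • proxf ((2:ℝ) • proxg b - b) - ((2:ℝ) • proxg b - b))‖
        ≤ ‖((2:ℝ) • proxg a - a) - ((2:ℝ) • proxg b - b)‖ :=
          refl_nonexpansive f hf_bot hf_proper hf_conv γ hγ proxf hpf _ _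
      _ ≤ ‖a - b‖ := refl_nonexpansive g hg_bot hg_proper hg_conv γ hγ proxg hpg a b
  -- residual and distance sequences
  set R : ℕ → ℝ := fun k => ‖z k - T (z k)‖ with hR
  set A : ℕ → ℝ := fun k => ‖z k - zstar‖^2 with hA
  have hRn : ∀ k, 0 ≤ R k := fun k => norm_nonneg _
  have hAn : ∀ k, 0 ≤ A k := fun k => sq_nonneg _
  have hstep : ∀ k, A (k+1) + lam k * (1 - lam k) * R k^2 ≤ A k := by
    intro k
    have hlk := hlam k
    obtain ⟨hl0, hl1⟩ := hlk
    have h3 := id3 (lam k) (z k) (T (z k)) zstar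
    have hne : ‖T (z k) - zstar‖ ≤ ‖z k - zstar‖ := by
      calc ‖T (z k) - zstar‖ = ‖T (z k) - T zstar‖ := by rw [hzstar]
        _ ≤ ‖z k - zstar‖ := hTne _ _
    have hA1 : A (k+1) = ‖(1 - lam k)•(z k) + (lam k)•(T (z k)) - zstar‖^2 := by
      have e : A (k+1) = ‖z (k+1) - zstar‖^2 := rfl
      rw [e, hz k]
    rw [hA1, h3]
    have hsq : ‖T (z k) - zstar‖^2 ≤ ‖z k - zstar‖^2 := by
      nlinarith [norm_nonneg (T (z k) - zstar), norm_nonneg (z k - zstar)]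
    simp only [hA, hR]
    nlinarith
  have hstepτ : ∀ k, τ * R k^2 ≤ A k - A (k+1) := by
    intro k
    have h1 := hstep k
    have h2 : τ * R k^2 ≤ lam k * (1 - lam k) * R k^2 :=
      mul_le_mul_of_nonneg_right (hτ k) (sq_nonneg _)
    linarith
  have hAanti : Antitone A := by
    apply antitone_nat_of_succ_le
    intro k
    have := hstepτ k
    nlinarith [hRn k]
  have hRanti : ∀ k, R (k+1) ≤ R k := by
    intro k
    obtain ⟨hl0, hl1⟩ := hlam k
    have h1 : z (k+1) - T (z k) = (1 - lam k) • (z k - T (z k)) := by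
      rw [hz k]; module
    have h2 : z k - z (k+1) = lam k • (z k - T (z k)) := by
      rw [hz k]; module
    calc R (k+1) = ‖z (k+1) - T (z (k+1))‖ := rfl
      _ ≤ ‖z (k+1) - T (z k)‖ + ‖T (z k) - T (z (k+1))‖ := by
          rw [show z (k+1) - T (z (k+1)) = (z (k+1) - T (z k)) + (T (z k) - T (z (k+1))) by abel]
          exact norm_add_le _ _
      _ ≤ ‖z (k+1) - T (z k)‖ + ‖z k - z (k+1)‖ := by
          have := hTne (z k) (z (k+1))
          linarith
      _ = (1 - lam k) * R k + lam k * R k := by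
          rw [h1, h2, norm_smul, norm_smul]
          simp only [Real.norm_eq_abs, abs_of_pos hl0, abs_of_pos (by linarith : (0:ℝ) < 1 - lam k)]
          rfl
      _ = R k := by ring
  -- summation bound
  have hsum : ∀ m j : ℕ, ((j:ℝ)+1) * (τ * R (m+j)^2) ≤ A m - A (m+j+1) := by
    intro m j
    induction j with
    | zero => simpa using hstepτ m
    | succ j ih =>
      have hmono := hRanti (m+j)
      have hsq : R (m+j+1)^2 ≤ R (m+j)^2 := by
        nlinarith [hRn (m+j+1), hRn (m+j)]
      have h1 : ((j:ℝ)+1) * (τ * R (m+j+1)^2) ≤ ((j:ℝ)+1) * (τ * R (m+j)^2) := by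
        apply mul_le_mul_of_nonneg_left _ (by positivity)
        exact mul_le_mul_of_nonneg_left hsq (le_of_lt hτ0)
      have h2 := hstepτ (m+j+1)
      rw [show m + (j+1) = m + j + 1 from rfl]
      push_cast
      nlinarith [h1, ih, h2]
  -- bound on residual
  have hres : ∀ k : ℕ, Real.sqrt (τ * ((k:ℝ)+1)) * R k ≤ D := by
    intro k
    have h1 := hsum 0 k
    rw [show (0:ℕ) + k = k from Nat.zero_add k] at h1
    have hA0 : A 0 = D^2 := rfl
    have h2 : ((k:ℝ)+1) * (τ * R k^2) ≤ D^2 := by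
      have := hAn (k+1)
      rw [hA0] at h1
      linarith
    apply le_of_sq_le_sq (by positivity) hDn
    rw [mul_pow, Real.sq_sqrt (by positivity)]
    nlinarith
  -- distance bound
  have hdist : ∀ k, ‖z k - zstar‖ ≤ D := by
    intro k
    have := hAanti (Nat.zero_le k)
    exact le_of_sq_le_sq (norm_nonneg _) hDn this
  -- residual = 2 * ‖xg k - xf k‖
  have hresid : ∀ k, z k - T (z k) = (2:ℝ) • (xg k - xf k) := by
    intro k
    rw [hT (z k), ← hxg k, show proxf ((2:ℝ) • xg k - z k) = xf k from (hxf k).symm]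
    module
  have hRval : ∀ k, R k = 2 * ‖xg k - xf k‖ := by
    intro k
    rw [hR]
    simp only
    rw [hresid k, norm_smul]
    simp
  -- real-valued gap bounds via subgradient inequalities
  have hupper : ∀ k, gap k ≤ (1/(2*γ)) * R k * (D + E) := by
    intro k
    have h1 := prox_subgrad g hg_bot hg_conv γ hγ (z k) (xg k) (hspec_g k) xstar hgs_fin (hgp_fin k)
    have h2 := prox_subgrad f hf_bot hf_conv γ hγ ((2:ℝ) • xg k - z k) (xf k) (hspec_f k)
      xstar hfs_fin (hfq_fin k)
    have hγ' : (0:ℝ) < 1/γ := by positivity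
    have e1 : ⟪z k - xg k, xstar - xg k⟫ = -⟪z k - xg k, xg k - xstar⟫ := by
      rw [← inner_neg_right]; congr 1; abel
    have e2 : ⟪(2:ℝ) • xg k - z k - xf k, xstar - xf k⟫
        = -⟪(2:ℝ) • xg k - z k - xf k, xf k - xstar⟫ := by
      rw [← inner_neg_right]; congr 1; abel
    have hid := id1 (z k) (xg k) (xf k) xstar
    have hid' := congrArg (fun t => (1/γ) * t) hid
    rw [e1] at h1; rw [e2] at h2
    have hcomb : gap k ≤ (1/γ) * ⟪xg k - xf k, z k - xstar⟫ - (1/γ) * ‖xg k - xf k‖^2 := by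
      simp only [hgap, hFq, hGp, hFs, hGs]
      nlinarith [h1, h2, hid']
    have hbd : ⟪xg k - xf k, z k - xstar⟫ ≤ ‖xg k - xf k‖ * ‖z k - xstar‖ :=
      real_inner_le_norm _ _
    have hzx : ‖z k - xstar‖ ≤ D + E := by
      calc ‖z k - xstar‖ = ‖(z k - zstar) + (zstar - xstar)‖ := by rw [sub_add_sub_cancel]
        _ ≤ ‖z k - zstar‖ + ‖zstar - xstar‖ := norm_add_le _ _
        _ ≤ D + E := by have := hdist k; rw [hE]; linarith
    have hpq : 2 * ‖xg k - xf k‖ = R k := (hRval k).symm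
    have hn1 : (0:ℝ) ≤ ‖xg k - xf k‖ := norm_nonneg _
    have hident : (1/(2*γ)) * R k * (D + E) = (1/γ) * (‖xg k - xf k‖ * (D + E)) := by
      rw [← hpq]; field_simp
    rw [hident]
    have hb2 : ⟪xg k - xf k, z k - xstar⟫ ≤ ‖xg k - xf k‖ * (D + E) := by
      calc ⟪xg k - xf k, z k - xstar⟫ ≤ ‖xg k - xf k‖ * ‖z k - xstar‖ := hbd
        _ ≤ ‖xg k - xf k‖ * (D + E) := mul_le_mul_of_nonneg_left hzx hn1
    calc gap k ≤ (1/γ) * ⟪xg k - xf k, z k - xstar⟫ - (1/γ) * ‖xg k - xf k‖^2 := hcomb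
      _ ≤ (1/γ) * ⟪xg k - xf k, z k - xstar⟫ := by nlinarith [sq_nonneg ‖xg k - xf k‖]
      _ ≤ (1/γ) * (‖xg k - xf k‖ * (D + E)) := mul_le_mul_of_nonneg_left hb2 (le_of_lt hγ')
  have hlower : ∀ k, -((1/(2*γ)) * R k * E) ≤ gap k := by
    intro k
    have h1 := prox_subgrad g hg_bot hg_conv γ hγ zstar xstar hspec_gs (xg k) (hgp_fin k) hgs_fin
    have h2 := prox_subgrad f hf_bot hf_conv γ hγ ((2:ℝ) • xstar - zstar) xstar hspec_fs
      (xf k) (hfq_fin k) hfs_fin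
    have hγ' : (0:ℝ) < 1/γ := by positivity
    have e3 : (2:ℝ) • xstar - zstar - xstar = -(zstar - xstar) := by module
    rw [e3] at h2
    have hid2 := id2 (zstar - xstar) (xg k) (xf k) xstar
    have hid2' := congrArg (fun t => (1/γ) * t) hid2
    have hip : -(‖zstar - xstar‖ * ‖xg k - xf k‖) ≤ ⟪zstar - xstar, xg k - xf k⟫ := by
      have h4 := real_inner_le_norm (zstar - xstar) (xf k - xg k)
      have h5 : ⟪zstar - xstar, xf k - xg k⟫ = -⟪zstar - xstar, xg k - xf k⟫ := by
        rw [← inner_neg_right]; congr 1; abel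
      have h6 : ‖xf k - xg k‖ = ‖xg k - xf k‖ := norm_sub_rev _ _
      rw [h5, h6] at h4
      linarith
    have hpq : 2 * ‖xg k - xf k‖ = R k := (hRval k).symm
    have hcomb : (1/γ) * ⟪zstar - xstar, xg k - xf k⟫ ≤ gap k := by
      simp only [hgap, hFq, hGp, hFs, hGs]
      nlinarith [h1, h2, hid2']
    have hident : (1/(2*γ)) * R k * E = (1/γ) * (E * ‖xg k - xf k‖) := by
      rw [← hpq]; field_simp
    rw [hident, hE]
    calc -((1/γ) * (‖zstar - xstar‖ * ‖xg k - xf k‖))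
        ≤ (1/γ) * ⟪zstar - xstar, xg k - xf k⟫ := by
          rw [neg_mul_eq_mul_neg (1/γ)]
          exact mul_le_mul_of_nonneg_left hip (le_of_lt hγ')
      _ ≤ gap k := hcomb
  -- final assembly
  have habs : ∀ k, |gap k| ≤ (1/(2*γ)) * (D + E) * R k := by
    intro k
    have hu := hupper k
    have hl := hlower k
    have h1 : (0:ℝ) ≤ 1/(2*γ) := by positivity
    rw [abs_le]
    constructor
    · nlinarith [hRn k, mul_nonneg (mul_nonneg h1 hDn) (hRn k)]
    · nlinarith
  refine ⟨fun k => ?_, ?_⟩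
  · have hs : (0:ℝ) < Real.sqrt (τ * ((k:ℝ)+1)) := Real.sqrt_pos.mpr (by positivity)
    set s := Real.sqrt (τ * ((k:ℝ)+1)) with hsdef
    have hRk : R k ≤ D / s := by
      rw [le_div_iff₀ hs]
      have := hres k
      linarith [this]
    constructor
    · rw [ebridge k]
      apply EReal.coe_le_coe_iff.mpr
      calc -(D * E / (2 * γ * s)) ≤ -((1/(2*γ)) * R k * E) := by
            rw [neg_le_neg_iff]
            calc (1/(2*γ)) * R k * E ≤ (1/(2*γ)) * (D/s) * E :=
                  mul_le_mul_of_nonneg_right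
                    (mul_le_mul_of_nonneg_left hRk (by positivity)) hEn
              _ = D * E / (2 * γ * s) := by
                  field_simp
        _ ≤ gap k := hlower k
    · rw [ebridge k]
      apply EReal.coe_le_coe_iff.mpr
      calc gap k ≤ (1/(2*γ)) * R k * (D + E) := hupper k
        _ ≤ (1/(2*γ)) * (D/s) * (D + E) :=
            mul_le_mul_of_nonneg_right
              (mul_le_mul_of_nonneg_left hRk (by positivity)) (by positivity)
        _ = (D + E) * D / (2 * γ * s) := by
            field_simp
  · -- convergence to zero
    have hAbdd : BddBelow (Set.range A) := ⟨0, by rintro x ⟨i, rfl⟩; exact hAn i⟩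
    have hAtend : Filter.Tendsto A Filter.atTop (nhds (⨅ i, A i)) :=
      tendsto_atTop_ciInf hAanti hAbdd
    have hhalf : Filter.Tendsto (fun m : ℕ => m / 2) Filter.atTop Filter.atTop :=
      Filter.tendsto_atTop_atTop.mpr (fun b => ⟨2*b, fun m hm => by omega⟩)
    have hsucc : Filter.Tendsto (fun m : ℕ => m + 1) Filter.atTop Filter.atTop :=
      Filter.tendsto_add_atTop_nat 1
    have h1 : Filter.Tendsto (fun m : ℕ => 2*(A (m/2) - A (m+1))) Filter.atTop (nhds 0) := by
      have := ((hAtend.comp hhalf).sub (hAtend.comp hsucc)).const_mul (2:ℝ)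
      simpa using this
    have hkey : ∀ m : ℕ, ((m:ℝ)+1) * (τ * R m^2) ≤ 2*(A (m/2) - A (m+1)) := by
      intro m
      have h2 := hsum (m/2) (m - m/2)
      have e : m/2 + (m - m/2) = m := by omega
      rw [e] at h2
      have e2 : (m:ℝ) + 1 ≤ 2*(((m - m/2 : ℕ):ℝ)+1) := by
        have : m + 1 ≤ 2*((m - m/2) + 1) := by omega
        exact_mod_cast this
      have hτR : (0:ℝ) ≤ τ * R m^2 := by positivity
      nlinarith [h2, mul_le_mul_of_nonneg_right e2 hτR]
    have hprod0 : Filter.Tendsto (fun m : ℕ => ((m:ℝ)+1) * (τ * R m^2))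
        Filter.atTop (nhds 0) :=
      squeeze_zero (fun m => by positivity) hkey h1
    have hprod1 : Filter.Tendsto (fun m : ℕ => ((m:ℝ)+1) * R m^2) Filter.atTop (nhds 0) := by
      have := hprod0.div_const τ
      rw [zero_div] at this
      apply this.congr
      intro m
      field_simp
    have hsqrtR : Filter.Tendsto (fun m : ℕ => Real.sqrt ((m:ℝ)+1) * R m)
        Filter.atTop (nhds 0) := by
      have h3 := hprod1.sqrt
      rw [Real.sqrt_zero] at h3
      apply h3.congr
      intro m
      rw [Real.sqrt_mul (by positivity), Real.sqrt_sq (hRn m)]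
    have hconst : Filter.Tendsto (fun m : ℕ => (1/(2*γ)) * (D + E) * (Real.sqrt ((m:ℝ)+1) * R m))
        Filter.atTop (nhds 0) := by
      have := hsqrtR.const_mul ((1/(2*γ)) * (D + E))
      simpa using this
    have hgoal_eq : ∀ k : ℕ, Real.sqrt ((k:ℝ)+1) *
        |(f (xf k) + g (xg k) - (f xstar + g xstar)).toReal| =
        Real.sqrt ((k:ℝ)+1) * |gap k| := by
      intro k
      rw [ebridge k, EReal.toReal_coe]
    apply Filter.Tendsto.congr (fun k => (hgoal_eq k).symm)
    apply squeeze_zero (fun k => by positivity) _ hconst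
    intro k
    have hsq : (0:ℝ) ≤ Real.sqrt ((k:ℝ)+1) := Real.sqrt_nonneg _
    calc Real.sqrt ((k:ℝ)+1) * |gap k|
        ≤ Real.sqrt ((k:ℝ)+1) * ((1/(2*γ)) * (D + E) * R k) :=
          mul_le_mul_of_nonneg_left (habs k) hsq
      _ = (1/(2*γ)) * (D + E) * (Real.sqrt ((k:ℝ)+1) * R k) := by ring
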